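/- arXiv:1209.5564 — 4 statements merged into one kernel-verified Lean document; each statement's English description precedes it below -/
import Mathlib

section
/- Let ι be a finite nonempty index type and a : ι → ℝ with a(e) > 0 for all e. Then there exists a constant C > 0 such that for every family u : ι → ℝ → ℂ of functions, each continuously differentiable on [0, a(e)], and for every e ∈ ι and every x ∈ [0, a(e)]: |u(e)(x)|² ≤ C · (Σ_{e'∈ι} ∫₀^{a(e')} |u(e')(s)|² ds)^{1/2} · (Σ_{e'∈ι} ∫₀^{a(e')} (|u(e')(s)|² + |u(e')'(s)|²) ds)^{1/2}. (Gagliardo–Nirenberg-type estimate on a finite metric graph: ‖u‖²_{L^∞(ℰ)} ≤ C ‖u‖_{L²(ℰ)} ‖u‖_{H¹(ℰ)}.) -/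
open Set MeasureTheory intervalIntegral

private lemma two_mul_le_aux (a b ε : ℝ) (hε : 0 < ε) :
    2 * (a * b) ≤ ε * a ^ 2 + ε⁻¹ * b ^ 2 := by
  rw [← sub_nonneg]
  have h : ε * a ^ 2 + ε⁻¹ * b ^ 2 - 2 * (a * b) = (ε * a - b) ^ 2 / ε := by
    field_simp; ring
  rw [h]; positivity

private lemma gn_edge (A : ℝ) (hA : 0 < A) (f f' : ℝ → ℂ)
    (hd : ∀ x ∈ Icc (0:ℝ) A, HasDerivWithinAt f (f' x) (Icc (0:ℝ) A) x)
    (hc' : ContinuousOn f' (Icc (0:ℝ) A)) {x : ℝ} (hx : x ∈ Icc (0:ℝ) A)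
    {ε : ℝ} (hε : 0 < ε) :
    ‖f x‖ ^ 2 ≤ (∫ s in (0:ℝ)..A, ‖f s‖ ^ 2) / A + ε * (∫ s in (0:ℝ)..A, ‖f s‖ ^ 2)
      + ε⁻¹ * (∫ s in (0:ℝ)..A, ‖f' s‖ ^ 2) := by
  have huIcc : uIcc (0:ℝ) A = Icc (0:ℝ) A := uIcc_of_le hA.le
  have hcf : ContinuousOn f (Icc (0:ℝ) A) := fun t ht => (hd t ht).continuousWithinAt
  set g : ℝ → ℝ := fun s => ‖f s‖ ^ 2 with hg_def
  set G : ℝ → ℝ := fun s => 2 * ((f s).re * (f' s).re + (f s).im * (f' s).im) with hG_def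
  have hgc : ContinuousOn g (Icc (0:ℝ) A) := hcf.norm.pow 2
  have hGc : ContinuousOn G (Icc (0:ℝ) A) := by
    apply ContinuousOn.mul continuousOn_const
    exact ((Complex.continuous_re.comp_continuousOn hcf).mul
      (Complex.continuous_re.comp_continuousOn hc')).add
      ((Complex.continuous_im.comp_continuousOn hcf).mul
      (Complex.continuous_im.comp_continuousOn hc'))
  have hgderiv : ∀ s ∈ Icc (0:ℝ) A, HasDerivWithinAt g (G s) (Icc (0:ℝ) A) s := by
    intro s hs
    have hder := hd s hs
    have hre := Complex.reCLM.hasFDerivAt.comp_hasDerivWithinAt s hder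
    have him := Complex.imCLM.hasFDerivAt.comp_hasDerivWithinAt s hder
    have h1 := (hre.mul hre).add (him.mul him)
    have h2 : HasDerivWithinAt g
        (Complex.reCLM (f' s) * (Complex.reCLM ∘ f) s + (Complex.reCLM ∘ f) s * Complex.reCLM (f' s)
          + (Complex.imCLM (f' s) * (Complex.imCLM ∘ f) s
            + (Complex.imCLM ∘ f) s * Complex.imCLM (f' s))) (Icc (0:ℝ) A) s := by
      refine h1.congr (fun t _ => ?_) ?_ <;>
        simp [hg_def, Complex.sq_norm, Complex.normSq_apply]
    have h3 : G s = Complex.reCLM (f' s) * (Complex.reCLM ∘ f) s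
        + (Complex.reCLM ∘ f) s * Complex.reCLM (f' s)
        + (Complex.imCLM (f' s) * (Complex.imCLM ∘ f) s
          + (Complex.imCLM ∘ f) s * Complex.imCLM (f' s)) := by
      simp [hG_def]
      ring
    rw [h3]; exact h2
  -- integrability
  have hgint : IntervalIntegrable g volume 0 A :=
    (huIcc ▸ hgc).intervalIntegrable
  have hGint : IntervalIntegrable G volume 0 A :=
    (huIcc ▸ hGc).intervalIntegrable
  have hf'int : IntervalIntegrable (fun s => ‖f' s‖ ^ 2) volume 0 A :=
    (huIcc ▸ hc'.norm.pow 2).intervalIntegrable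
  -- minimum point
  obtain ⟨y, hy, hymin⟩ := isCompact_Icc.exists_isMinOn (nonempty_Icc.2 hA.le) hgc
  have hymean : g y ≤ (∫ s in (0:ℝ)..A, g s) / A := by
    rw [le_div_iff₀ hA]
    have h1 : ∫ _ in (0:ℝ)..A, g y ≤ ∫ s in (0:ℝ)..A, g s :=
      integral_mono_on hA.le intervalIntegrable_const hgint
        (fun s hs => (isMinOn_iff.mp hymin) s hs)
    simpa [mul_comm] using h1
  -- pointwise bound on G
  have hGbound : ∀ s ∈ Icc (0:ℝ) A, |G s| ≤ ε * ‖f s‖ ^ 2 + ε⁻¹ * ‖f' s‖ ^ 2 := by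
    intro s _
    have h1 : G s = 2 * ((starRingEnd ℂ (f s)) * f' s).re := by
      simp only [hG_def, Complex.mul_re, Complex.conj_re, Complex.conj_im]
      ring
    have h2 : |G s| ≤ 2 * (‖f s‖ * ‖f' s‖) := by
      rw [h1, abs_mul, abs_of_nonneg (by norm_num : (0:ℝ) ≤ 2)]
      have h3 := Complex.abs_re_le_norm ((starRingEnd ℂ (f s)) * f' s)
      have h4 : ‖(starRingEnd ℂ (f s)) * f' s‖ = ‖f s‖ * ‖f' s‖ := by
        simp [norm_mul, Complex.norm_conj]
      linarith
    exact h2.trans (two_mul_le_aux _ _ _ hε)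
  -- integral bound on |G|
  have habsint : IntervalIntegrable (fun s => |G s|) volume 0 A := hGint.abs
  have hrhsint : IntervalIntegrable (fun s => ε * ‖f s‖ ^ 2 + ε⁻¹ * ‖f' s‖ ^ 2) volume 0 A :=
    (hgint.const_mul ε).add (hf'int.const_mul ε⁻¹)
  have hintG : ∫ s in (0:ℝ)..A, |G s| ≤
      ε * (∫ s in (0:ℝ)..A, ‖f s‖ ^ 2) + ε⁻¹ * (∫ s in (0:ℝ)..A, ‖f' s‖ ^ 2) := by
    have h1 : ∫ s in (0:ℝ)..A, |G s| ≤ ∫ s in (0:ℝ)..A, (ε * ‖f s‖ ^ 2 + ε⁻¹ * ‖f' s‖ ^ 2) :=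
      integral_mono_on hA.le habsint hrhsint hGbound
    rwa [integral_add (hgint.const_mul ε) (hf'int.const_mul ε⁻¹),
      intervalIntegral.integral_const_mul, intervalIntegral.integral_const_mul] at h1
  -- FTC on subintervals
  have hftc : ∀ c ∈ Icc (0:ℝ) A, ∀ d ∈ Icc (0:ℝ) A, c ≤ d →
      ∫ s in c..d, G s = g d - g c := by
    intro c hc d hd hcd
    refine integral_eq_sub_of_hasDeriv_right_of_le hcd (hgc.mono (Icc_subset_Icc hc.1 hd.2))
      (fun s hs => ?_) ((hGc.mono ?_).intervalIntegrable)
    · have hs' : s ∈ Ioo (0:ℝ) A := ⟨lt_of_le_of_lt hc.1 hs.1, lt_of_lt_of_le hs.2 hd.2⟩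
      exact ((hgderiv s (Ioo_subset_Icc_self hs')).hasDerivAt
        (Icc_mem_nhds hs'.1 hs'.2)).hasDerivWithinAt
    · rw [uIcc_of_le hcd]; exact Icc_subset_Icc hc.1 hd.2
  -- |∫ G over subinterval| ≤ ∫₀^A |G|
  have habs_sub : ∀ c ∈ Icc (0:ℝ) A, ∀ d ∈ Icc (0:ℝ) A, c ≤ d →
      |∫ s in c..d, G s| ≤ ∫ s in (0:ℝ)..A, |G s| := by
    intro c hc d hd hcd
    have h1 : |∫ s in c..d, G s| ≤ ∫ s in c..d, |G s| := by
      simpa using intervalIntegral.norm_integral_le_integral_norm (f := G) (μ := volume) hcd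
    refine h1.trans (integral_mono_interval hc.1 hcd hd.2 ?_ habsint)
    exact Filter.Eventually.of_forall fun s => abs_nonneg _
  -- combine
  have hkey : g x ≤ g y + ∫ s in (0:ℝ)..A, |G s| := by
    rcases le_total y x with hyx | hxy
    · have := hftc y hy x hx hyx
      have h2 := habs_sub y hy x hx hyx
      have h3 : g x - g y ≤ |∫ s in y..x, G s| := by rw [this] at *; exact le_abs_self _
      linarith
    · have := hftc x hx y hy hxy
      have h2 := habs_sub x hx y hy hxy
      have h3 : -(g y - g x) ≤ |∫ s in x..y, G s| := by rw [this] at *; exact neg_le_abs _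
      linarith
  calc ‖f x‖ ^ 2 = g x := rfl
    _ ≤ g y + ∫ s in (0:ℝ)..A, |G s| := hkey
    _ ≤ (∫ s in (0:ℝ)..A, ‖f s‖ ^ 2) / A + (ε * (∫ s in (0:ℝ)..A, ‖f s‖ ^ 2)
          + ε⁻¹ * (∫ s in (0:ℝ)..A, ‖f' s‖ ^ 2)) := add_le_add hymean hintG
    _ = _ := by ring

/-- Gagliardo–Nirenberg-type estimate on a finite metric graph:
there is `C > 0` with `‖u‖²_{L^∞(ℰ)} ≤ C ‖u‖_{L²(ℰ)} ‖u‖_{H¹(ℰ)}` for all edgewise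
continuously differentiable families `u`. -/
theorem stmt_2 (ι : Type*) [Fintype ι] [Nonempty ι] (a : ι → ℝ) (ha : ∀ e, 0 < a e) :
    ∃ C > (0:ℝ), ∀ (u u' : ι → ℝ → ℂ),
      (∀ e, ∀ x ∈ Set.Icc (0:ℝ) (a e), HasDerivWithinAt (u e) (u' e x) (Set.Icc (0:ℝ) (a e)) x) →
      (∀ e, ContinuousOn (u' e) (Set.Icc (0:ℝ) (a e))) →
      ∀ e, ∀ x ∈ Set.Icc (0:ℝ) (a e),
        ‖u e x‖ ^ 2 ≤ C * Real.sqrt (∑ e', ∫ s in (0:ℝ)..(a e'), ‖u e' s‖ ^ 2) *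
          Real.sqrt (∑ e', ∫ s in (0:ℝ)..(a e'), (‖u e' s‖ ^ 2 + ‖u' e' s‖ ^ 2)) := by
  classical
  set C : ℝ := 2 + ∑ e, (a e)⁻¹ with hC_def
  have hC0 : ∀ e, (a e)⁻¹ ≤ ∑ e', (a e')⁻¹ :=
    fun e => Finset.single_le_sum (fun i _ => (inv_pos.2 (ha i)).le) (Finset.mem_univ e)
  have hCpos : 0 < C := by
    have h : (0:ℝ) ≤ ∑ e, (a e)⁻¹ :=
      Finset.sum_nonneg fun i _ => (inv_pos.2 (ha i)).le
    rw [hC_def]; linarith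
  refine ⟨C, hCpos, fun u u' hd hc' e x hx => ?_⟩
  -- notation
  set I : ι → ℝ := fun e' => ∫ s in (0:ℝ)..(a e'), ‖u e' s‖ ^ 2 with hI_def
  set J : ι → ℝ := fun e' => ∫ s in (0:ℝ)..(a e'), ‖u' e' s‖ ^ 2 with hJ_def
  -- integrability and nonnegativity per edge
  have huIcc : ∀ e', uIcc (0:ℝ) (a e') = Icc (0:ℝ) (a e') := fun e' => uIcc_of_le (ha e').le
  have hcu : ∀ e', ContinuousOn (u e') (Icc (0:ℝ) (a e')) :=
    fun e' t ht => (hd e' t ht).continuousWithinAt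
  have hIint : ∀ e', IntervalIntegrable (fun s => ‖u e' s‖ ^ 2) volume 0 (a e') :=
    fun e' => ((huIcc e') ▸ (hcu e').norm.pow 2).intervalIntegrable
  have hJint : ∀ e', IntervalIntegrable (fun s => ‖u' e' s‖ ^ 2) volume 0 (a e') :=
    fun e' => ((huIcc e') ▸ (hc' e').norm.pow 2).intervalIntegrable
  have hInn : ∀ e', 0 ≤ I e' := fun e' =>
    intervalIntegral.integral_nonneg (ha e').le (fun s _ => sq_nonneg _)
  have hJnn : ∀ e', 0 ≤ J e' := fun e' =>
    intervalIntegral.integral_nonneg (ha e').le (fun s _ => sq_nonneg _)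
  -- the sums in the statement
  have hsum2 : ∀ e', (∫ s in (0:ℝ)..(a e'), (‖u e' s‖ ^ 2 + ‖u' e' s‖ ^ 2)) = I e' + J e' :=
    fun e' => integral_add (hIint e') (hJint e')
  set L : ℝ := ∑ e', I e' with hL_def
  set H : ℝ := ∑ e', ∫ s in (0:ℝ)..(a e'), (‖u e' s‖ ^ 2 + ‖u' e' s‖ ^ 2) with hH_def
  have hHeq : H = L + ∑ e', J e' := by
    rw [hH_def, hL_def, ← Finset.sum_add_distrib]
    exact Finset.sum_congr rfl fun e' _ => (hsum2 e')
  have hLnn : 0 ≤ L := Finset.sum_nonneg fun i _ => hInn i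
  have hJsumnn : 0 ≤ ∑ e', J e' := Finset.sum_nonneg fun i _ => hJnn i
  have hHnn : 0 ≤ H := by rw [hHeq]; linarith
  have hLH : L ≤ H := by rw [hHeq]; linarith
  have hIeL : I e ≤ L := Finset.single_le_sum (fun i _ => hInn i) (Finset.mem_univ e)
  have hJeH : J e ≤ H := by
    rw [hHeq]
    have := Finset.single_le_sum (fun i _ => hJnn i) (Finset.mem_univ e)
    linarith
  -- key edge estimate for every ε > 0
  have hkey : ∀ ε : ℝ, 0 < ε → ‖u e x‖ ^ 2 ≤ I e / a e + ε * L + ε⁻¹ * H := by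
    intro ε hε
    have h1 := gn_edge (a e) (ha e) (u e) (u' e) (hd e) (hc' e) hx hε
    have h2 : ε * I e ≤ ε * L := by
      exact mul_le_mul_of_nonneg_left hIeL hε.le
    have h3 : ε⁻¹ * J e ≤ ε⁻¹ * H := by
      exact mul_le_mul_of_nonneg_left hJeH (inv_pos.2 hε).le
    calc ‖u e x‖ ^ 2 ≤ I e / a e + ε * I e + ε⁻¹ * J e := h1
      _ ≤ I e / a e + ε * L + ε⁻¹ * H := by linarith
  clear_value I J L H
  rcases eq_or_lt_of_le hLnn with hL0 | hLpos
  · -- L = 0 case: u e x must satisfy ‖u e x‖² ≤ 0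
    have hIe0 : I e = 0 := le_antisymm (hL0 ▸ hIeL) (hInn e)
    have hle : ∀ ε : ℝ, 0 < ε → ‖u e x‖ ^ 2 ≤ ε⁻¹ * H := by
      intro ε hε
      have := hkey ε hε
      rw [hIe0, ← hL0] at this
      simpa using this
    have h0 : ‖u e x‖ ^ 2 ≤ 0 := by
      by_contra h
      push_neg at h
      have hε : 0 < (H + 1) / ‖u e x‖ ^ 2 := div_pos (by linarith) h
      have h2 := hle _ hε
      rw [inv_div] at h2
      rw [div_mul_eq_mul_div, le_div_iff₀ (by linarith : (0:ℝ) < H + 1)] at h2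
      nlinarith
    have hrhs : 0 ≤ C * Real.sqrt L * Real.sqrt H :=
      mul_nonneg (mul_nonneg hCpos.le (Real.sqrt_nonneg _)) (Real.sqrt_nonneg _)
    exact h0.trans hrhs
  · -- L > 0 case
    have hHpos : 0 < H := lt_of_lt_of_le hLpos hLH
    set sL := Real.sqrt L with hsL_def
    set sH := Real.sqrt H with hsH_def
    have hsLpos : 0 < sL := Real.sqrt_pos.2 hLpos
    have hsHpos : 0 < sH := Real.sqrt_pos.2 hHpos
    have hsL2 : sL ^ 2 = L := Real.sq_sqrt hLnn
    have hsH2 : sH ^ 2 = H := Real.sq_sqrt hHnn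
    have hsLH : sL ≤ sH := Real.sqrt_le_sqrt hLH
    have hε : 0 < sH / sL := div_pos hsHpos hsLpos
    have h1 := hkey _ hε
    have h2 : (sH / sL) * L = sH * sL := by
      rw [← hsL2]; field_simp
    have h3 : (sH / sL)⁻¹ * H = sL * sH := by
      rw [← hsH2, inv_div]; field_simp
    have h4 : I e / a e ≤ sL * sH * ((a e)⁻¹) := by
      have hIL : I e ≤ sL * sH := by
        calc I e ≤ L := hIeL
          _ = sL * sL := by rw [← hsL2]; ring
          _ ≤ sL * sH := mul_le_mul_of_nonneg_left hsLH hsLpos.le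
      rw [div_eq_mul_inv]
      exact mul_le_mul_of_nonneg_right hIL (inv_pos.2 (ha e)).le
    have h5 : sL * sH * ((a e)⁻¹) ≤ sL * sH * (∑ e', (a e')⁻¹) :=
      mul_le_mul_of_nonneg_left (hC0 e) (mul_nonneg hsLpos.le hsHpos.le)
    calc ‖u e x‖ ^ 2 ≤ I e / a e + (sH / sL) * L + (sH / sL)⁻¹ * H := h1
      _ ≤ sL * sH * (∑ e', (a e')⁻¹) + sH * sL + sL * sH := by
          rw [h2, h3]; linarith
      _ = C * sL * sH := by rw [hC_def]; ring
end

section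
/- For every a > 0 there exists a constant C > 0 such that for every u : ℝ → ℂ continuously differentiable on [0,a]: |u(0)|² + |u(a)|² ≤ C · (∫₀^a |u(x)|² dx)^{1/2} · (∫₀^a (|u(x)|² + |u'(x)|²) dx)^{1/2}. -/
open Set intervalIntegral

/-- Cauchy–Schwarz for interval integrals of continuous functions. -/
lemma cs_interval {a : ℝ} (ha : 0 ≤ a) {f g : ℝ → ℝ}
    (hf : ContinuousOn f (Set.Icc 0 a)) (hg : ContinuousOn g (Set.Icc 0 a)) :
    ∫ x in (0:ℝ)..a, |f x| * |g x| ≤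
      Real.sqrt (∫ x in (0:ℝ)..a, f x ^ 2) * Real.sqrt (∫ x in (0:ℝ)..a, g x ^ 2) := by
  have huIcc : Set.uIcc (0:ℝ) a = Set.Icc 0 a := Set.uIcc_of_le ha
  have hf2 : IntervalIntegrable (fun x => f x ^ 2) MeasureTheory.volume 0 a :=
    ((hf.pow 2).intervalIntegrable_of_Icc ha)
  have hg2 : IntervalIntegrable (fun x => g x ^ 2) MeasureTheory.volume 0 a :=
    ((hg.pow 2).intervalIntegrable_of_Icc ha)
  have hfg : IntervalIntegrable (fun x => |f x| * |g x|) MeasureTheory.volume 0 a :=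
    ((hf.abs.mul hg.abs).intervalIntegrable_of_Icc ha)
  set A := ∫ x in (0:ℝ)..a, f x ^ 2 with hA
  set B := ∫ x in (0:ℝ)..a, g x ^ 2 with hB
  set I := ∫ x in (0:ℝ)..a, |f x| * |g x| with hI
  have hAnn : 0 ≤ A := intervalIntegral.integral_nonneg ha (fun x _ => sq_nonneg _)
  have hBnn : 0 ≤ B := intervalIntegral.integral_nonneg ha (fun x _ => sq_nonneg _)
  have hInn : 0 ≤ I := intervalIntegral.integral_nonneg ha
    (fun x _ => mul_nonneg (abs_nonneg _) (abs_nonneg _))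
  have key : ∀ t : ℝ, 0 ≤ A * (t * t) + (2 * I) * t + B := by
    intro t
    have h1 : A * (t * t) + (2 * I) * t + B
        = ∫ x in (0:ℝ)..a, (t * |f x| + |g x|) ^ 2 := by
      have e1 : ∀ x, (t * |f x| + |g x|) ^ 2
          = (t * t) * f x ^ 2 + (2 * t) * (|f x| * |g x|) + g x ^ 2 := by
        intro x
        have : |f x| ^ 2 = f x ^ 2 := sq_abs _
        nlinarith [sq_abs (f x), sq_abs (g x)]
      rw [intervalIntegral.integral_congr (fun x _ => e1 x)]
      rw [intervalIntegral.integral_add ((hf2.const_mul _).add (hfg.const_mul _)) hg2,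
        intervalIntegral.integral_add (hf2.const_mul _) (hfg.const_mul _),
        intervalIntegral.integral_const_mul, intervalIntegral.integral_const_mul]
      ring
    rw [h1]
    exact intervalIntegral.integral_nonneg ha (fun x _ => sq_nonneg _)
  have hdisc : discrim A (2 * I) B ≤ 0 := discrim_le_zero key
  rw [discrim] at hdisc
  have hI2 : I ^ 2 ≤ A * B := by nlinarith
  calc I = Real.sqrt (I ^ 2) := (Real.sqrt_sq hInn).symm
    _ ≤ Real.sqrt (A * B) := Real.sqrt_le_sqrt hI2
    _ = Real.sqrt A * Real.sqrt B := Real.sqrt_mul hAnn _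

/-- For every `a > 0` there is `C > 0` such that for every `u : ℝ → ℂ`
continuously differentiable on `[0,a]`:
`|u(0)|² + |u(a)|² ≤ C · ‖u‖_{L²(0,a)} · ‖u‖_{H¹(0,a)}`. -/
theorem stmt_3 (a : ℝ) (ha : 0 < a) :
    ∃ C > (0:ℝ), ∀ (u u' : ℝ → ℂ),
      (∀ x ∈ Set.Icc (0:ℝ) a, HasDerivWithinAt u (u' x) (Set.Icc (0:ℝ) a) x) →
      ContinuousOn u' (Set.Icc (0:ℝ) a) →
      ‖u 0‖ ^ 2 + ‖u a‖ ^ 2 ≤ C * Real.sqrt (∫ x in (0:ℝ)..a, ‖u x‖ ^ 2) *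
        Real.sqrt (∫ x in (0:ℝ)..a, (‖u x‖ ^ 2 + ‖u' x‖ ^ 2)) := by
  refine ⟨2 / a + 2, by positivity, ?_⟩
  intro u u' hderiv hcont'
  have ha' : (0:ℝ) ≤ a := ha.le
  have huIcc : Set.uIcc (0:ℝ) a = Set.Icc 0 a := Set.uIcc_of_le ha'
  have hmem0 : (0:ℝ) ∈ Set.Icc (0:ℝ) a := ⟨le_refl _, ha'⟩
  have hmema : a ∈ Set.Icc (0:ℝ) a := ⟨ha', le_refl _⟩
  have hu : ContinuousOn u (Set.Icc 0 a) :=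
    fun x hx => (hderiv x hx).continuousWithinAt
  -- F and its derivative
  set F : ℝ → ℝ := fun x => (1 - 2 / a * x) * ‖u x‖ ^ 2 with hF
  set F' : ℝ → ℝ := fun x =>
    (-(2 / a)) * ‖u x‖ ^ 2 + (1 - 2 / a * x) * (2 * (inner ℝ (u x) (u' x) : ℝ)) with hF'
  have hFderiv : ∀ x ∈ Set.Icc (0:ℝ) a,
      HasDerivWithinAt F (F' x) (Set.Icc (0:ℝ) a) x := by
    intro x hx
    have h1 : HasDerivWithinAt (fun y : ℝ => 1 - 2 / a * y) (-(2 / a)) (Set.Icc (0:ℝ) a) x := by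
      simpa using ((hasDerivWithinAt_id x (Set.Icc (0:ℝ) a)).const_mul (2/a)).const_sub 1
    have h2 : HasDerivWithinAt (fun y => ‖u y‖ ^ 2) (2 * (inner ℝ (u x) (u' x) : ℝ))
        (Set.Icc (0:ℝ) a) x := (hderiv x hx).norm_sq
    simpa [F, F', Pi.mul_def] using h1.mul h2
  have hFcont : ContinuousOn F (Set.Icc (0:ℝ) a) := by
    apply ContinuousOn.mul
    · fun_prop
    · exact (hu.norm.pow 2)
  have hF'cont : ContinuousOn F' (Set.Icc (0:ℝ) a) := by
    apply ContinuousOn.add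
    · exact continuousOn_const.mul (hu.norm.pow 2)
    · exact ContinuousOn.mul (by fun_prop) (continuousOn_const.mul (hu.inner hcont'))
  have hF'int : IntervalIntegrable F' MeasureTheory.volume 0 a :=
    hF'cont.intervalIntegrable_of_Icc ha'
  have hFTC : ∫ x in (0:ℝ)..a, F' x = F a - F 0 := by
    apply intervalIntegral.integral_eq_sub_of_hasDeriv_right_of_le ha' hFcont ?_ hF'int
    intro x hx
    exact (hFderiv x ⟨hx.1.le, hx.2.le⟩).mono_of_mem_nhdsWithin
      (Filter.mem_of_superset (Ioo_mem_nhdsGT_of_mem ⟨le_refl x, hx.2⟩)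
        (Set.Ioo_subset_Icc_self.trans (Set.Icc_subset_Icc hx.1.le le_rfl)))
  have haz : a ≠ 0 := ne_of_gt ha
  have hFa : F a - F 0 = -(‖u 0‖ ^ 2 + ‖u a‖ ^ 2) := by
    simp only [F]
    field_simp
    ring
  -- integrability facts
  have hu2 : IntervalIntegrable (fun x => ‖u x‖ ^ 2) MeasureTheory.volume 0 a :=
    (hu.norm.pow 2).intervalIntegrable_of_Icc ha'
  have hu'2 : IntervalIntegrable (fun x => ‖u' x‖ ^ 2) MeasureTheory.volume 0 a :=
    (hcont'.norm.pow 2).intervalIntegrable_of_Icc ha'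
  have huu' : IntervalIntegrable (fun x => |‖u x‖| * |‖u' x‖|) MeasureTheory.volume 0 a :=
    (hu.norm.abs.mul hcont'.norm.abs).intervalIntegrable_of_Icc ha'
  set A := ∫ x in (0:ℝ)..a, ‖u x‖ ^ 2 with hAdef
  set B := ∫ x in (0:ℝ)..a, ‖u' x‖ ^ 2 with hBdef
  have hAnn : 0 ≤ A := intervalIntegral.integral_nonneg ha' (fun x _ => sq_nonneg _)
  have hBnn : 0 ≤ B := intervalIntegral.integral_nonneg ha' (fun x _ => sq_nonneg _)
  have hSsum : (∫ x in (0:ℝ)..a, (‖u x‖ ^ 2 + ‖u' x‖ ^ 2)) = A + B :=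
    intervalIntegral.integral_add hu2 hu'2
  -- step 1: LHS = ∫ -F'
  have step1 : ‖u 0‖ ^ 2 + ‖u a‖ ^ 2 = ∫ x in (0:ℝ)..a, -F' x := by
    rw [intervalIntegral.integral_neg, hFTC, hFa]
    ring
  -- step 2: pointwise bound
  have step2 : (∫ x in (0:ℝ)..a, -F' x)
      ≤ ∫ x in (0:ℝ)..a, ((2 / a) * ‖u x‖ ^ 2 + 2 * (|‖u x‖| * |‖u' x‖|)) := by
    apply intervalIntegral.integral_mono_on ha' hF'int.neg
      ((hu2.const_mul _).add (huu'.const_mul _))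
    intro x hx
    have hx1 : |1 - 2 / a * x| ≤ 1 := by
      rw [abs_le]
      have h : 2 / a * x ≤ 2 := by
        rw [div_mul_eq_mul_div, div_le_iff₀ ha]
        nlinarith [hx.2]
      have h0 : 0 ≤ 2 / a * x := mul_nonneg (by positivity) hx.1
      constructor <;> linarith
    have hinner : |(inner ℝ (u x) (u' x) : ℝ)| ≤ ‖u x‖ * ‖u' x‖ := abs_real_inner_le_norm _ _
    simp only [Pi.neg_apply, F', neg_add, abs_norm]
    have h1 : -((1 - 2 / a * x) * (2 * (inner ℝ (u x) (u' x) : ℝ)))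
        ≤ 2 * (‖u x‖ * ‖u' x‖) := by
      calc -((1 - 2 / a * x) * (2 * (inner ℝ (u x) (u' x) : ℝ)))
          ≤ |(1 - 2 / a * x) * (2 * (inner ℝ (u x) (u' x) : ℝ))| := neg_le_abs _
        _ = |1 - 2 / a * x| * (2 * |(inner ℝ (u x) (u' x) : ℝ)|) := by
            rw [abs_mul, abs_mul]; simp [abs_of_nonneg, mul_comm]
        _ ≤ 1 * (2 * (‖u x‖ * ‖u' x‖)) := by
            apply mul_le_mul hx1 (by linarith) (by positivity) zero_le_one
        _ = 2 * (‖u x‖ * ‖u' x‖) := one_mul _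
    have h2 : -((-(2 / a)) * ‖u x‖ ^ 2) = 2 / a * ‖u x‖ ^ 2 := by ring
    linarith
  -- step 3: expand RHS of step2 and apply Cauchy-Schwarz
  have hCS : (∫ x in (0:ℝ)..a, |‖u x‖| * |‖u' x‖|)
      ≤ Real.sqrt A * Real.sqrt B := cs_interval ha' hu.norm hcont'.norm
  have step3 : (∫ x in (0:ℝ)..a, ((2 / a) * ‖u x‖ ^ 2 + 2 * (|‖u x‖| * |‖u' x‖|)))
      = (2 / a) * A + 2 * ∫ x in (0:ℝ)..a, |‖u x‖| * |‖u' x‖| := by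
    rw [intervalIntegral.integral_add (hu2.const_mul _) (huu'.const_mul _),
      intervalIntegral.integral_const_mul, intervalIntegral.integral_const_mul]
  -- final sqrt bounds
  have hsA : Real.sqrt A ≤ Real.sqrt (A + B) :=
    Real.sqrt_le_sqrt (le_add_of_nonneg_right hBnn)
  have hsB : Real.sqrt B ≤ Real.sqrt (A + B) :=
    Real.sqrt_le_sqrt (le_add_of_nonneg_left hAnn)
  have hAeq : A = Real.sqrt A * Real.sqrt A := (Real.mul_self_sqrt hAnn).symm
  have hsAnn : 0 ≤ Real.sqrt A := Real.sqrt_nonneg _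
  rw [hSsum]
  calc ‖u 0‖ ^ 2 + ‖u a‖ ^ 2
      ≤ (2 / a) * A + 2 * ∫ x in (0:ℝ)..a, |‖u x‖| * |‖u' x‖| := by
        rw [step1, ← step3]; exact step2
    _ ≤ (2 / a) * (Real.sqrt A * Real.sqrt (A + B))
        + 2 * (Real.sqrt A * Real.sqrt (A + B)) := by
        have c1 : A ≤ Real.sqrt A * Real.sqrt (A + B) :=
          calc A = Real.sqrt A * Real.sqrt A := hAeq
            _ ≤ Real.sqrt A * Real.sqrt (A + B) := mul_le_mul_of_nonneg_left hsA hsAnn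
        have c2 : (∫ x in (0:ℝ)..a, |‖u x‖| * |‖u' x‖|)
            ≤ Real.sqrt A * Real.sqrt (A + B) :=
          hCS.trans (mul_le_mul_of_nonneg_left hsB hsAnn)
        have h2a : (0:ℝ) ≤ 2 / a := by positivity
        nlinarith
    _ = (2 / a + 2) * Real.sqrt A * Real.sqrt (A + B) := by ring
end

section
/- Let n ∈ ℕ and let P be an n×n complex matrix with P² = P and Pᴴ = P (an orthogonal projection), let P⊥ = I − P, and let L be an n×n complex matrix with L·P = 0 and P·L = 0. Then the orthogonal complement in ℂⁿ×ℂⁿ (with the standard Hermitian inner product) of the subspace {(x,y) : −P⊥x + (L+P)y = 0} equals the subspace {(x,y) : (Lᴴ+P)x + P⊥y = 0}. -/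
open Matrix

private lemma adj_dot {n : ℕ} (M : Matrix (Fin n) (Fin n) ℂ) (p q : Fin n → ℂ) :
    p ⬝ᵥ star (M.mulVec q) = (Mᴴ.mulVec p) ⬝ᵥ star q := by
  simp only [dotProduct, mulVec, dotProduct, Pi.star_apply, conjTranspose_apply,
    star_sum, star_mul', Finset.mul_sum, Finset.sum_mul]
  rw [Finset.sum_comm]
  apply Finset.sum_congr rfl; intro i _; apply Finset.sum_congr rfl; intro j _
  ring

private lemma dot_all_zero {n : ℕ} (v : Fin n → ℂ) (h : ∀ u, v ⬝ᵥ star u = 0) : v = 0 := by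
  funext i
  have := h (Pi.single i 1)
  simpa [dotProduct, Pi.single_apply, apply_ite] using this

/-- for an orthogonal projection `P` and `L` acting in `Ker P`, the
orthogonal complement in `ℂⁿ×ℂⁿ` (standard Hermitian inner product, conjugate-linear
in the second argument) of `{(x,y) : −P⊥x + (L+P)y = 0}` is
`{(x,y) : (Lᴴ+P)x + P⊥y = 0}`. -/
theorem stmt_7 (n : ℕ) (P L : Matrix (Fin n) (Fin n) ℂ)
    (hP2 : P * P = P) (hPH : Pᴴ = P) (hLP : L * P = 0) (hPL : P * L = 0) :
    {p : (Fin n → ℂ) × (Fin n → ℂ) |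
        ∀ q : (Fin n → ℂ) × (Fin n → ℂ),
          -((1 - P).mulVec q.1) + (L + P).mulVec q.2 = 0 →
          ((∑ i, p.1 i * (starRingEnd ℂ) (q.1 i)) +
            ∑ i, p.2 i * (starRingEnd ℂ) (q.2 i)) = 0} =
      {p : (Fin n → ℂ) × (Fin n → ℂ) |
        (Lᴴ + P).mulVec p.1 + (1 - P).mulVec p.2 = 0} := by
  have hPLH : P * Lᴴ = 0 := by
    have := congrArg conjTranspose hLP
    simpa [conjTranspose_mul, hPH] using this
  have hLHP : Lᴴ * P = 0 := by
    have := congrArg conjTranspose hPL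
    simpa [conjTranspose_mul, hPH] using this
  have key : ∀ (p q : Fin n → ℂ) (M : Matrix (Fin n) (Fin n) ℂ),
      (∑ i, p i * (starRingEnd ℂ) ((M.mulVec q) i)) = (Mᴴ.mulVec p) ⬝ᵥ star q := by
    intro p q M; exact adj_dot M p q
  ext ⟨x, y⟩
  simp only [Set.mem_setOf_eq]
  constructor
  · intro h
    -- first: P x = 0
    have h1 : P.mulVec x = 0 := by
      apply dot_all_zero
      intro u
      have hm : -((1 - P).mulVec (P.mulVec u)) + (L + P).mulVec (0 : Fin n → ℂ) = 0 := by
        rw [mulVec_mulVec]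
        have : (1 - P) * P = 0 := by
          rw [sub_mul, one_mul, hP2, sub_self]
        simp [this]
      have := h (P.mulVec u, 0) hm
      simp only at this
      have e1 : (∑ i, x i * (starRingEnd ℂ) ((P.mulVec u) i)) = (P.mulVec x) ⬝ᵥ star u := by
        rw [key x u P, hPH]
      simp only [e1] at this
      simpa using this
    -- second: Lᴴ x + (1-P) y = 0
    have h2 : Lᴴ.mulVec x + (1 - P).mulVec y = 0 := by
      apply dot_all_zero
      intro v
      have hm : -((1 - P).mulVec (L.mulVec v)) + (L + P).mulVec ((1 - P).mulVec v) = 0 := by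
        rw [mulVec_mulVec, mulVec_mulVec]
        have e1 : (1 - P) * L = L := by rw [sub_mul, one_mul, hPL, sub_zero]
        have e2 : (L + P) * (1 - P) = L := by
          rw [add_mul, mul_sub, mul_sub, mul_one, mul_one, hLP, hP2, sub_zero, sub_self,
            add_zero]
        rw [e1, e2, neg_add_cancel]
      have := h (L.mulVec v, (1 - P).mulVec v) hm
      simp only at this
      rw [key x v L, key y v (1 - P)] at this
      have hherm : (1 - P)ᴴ = 1 - P := by simp [hPH]
      rw [hherm] at this
      rw [add_dotProduct]
      exact this
    rw [add_mulVec, h1, add_zero]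
    exact h2
  · intro h q hq
    -- extract facts about p
    have hPx : P.mulVec x = 0 := by
      have := congrArg (P.mulVec) h
      rw [mulVec_add, mulVec_mulVec, mulVec_mulVec] at this
      have e1 : P * (Lᴴ + P) = P := by rw [mul_add, hPLH, zero_add, hP2]
      have e2 : P * (1 - P) = 0 := by rw [mul_sub, mul_one, hP2, sub_self]
      rw [e1, e2] at this
      simpa using this
    have hLHx : Lᴴ.mulVec x + (1 - P).mulVec y = 0 := by
      have h' := h
      rw [add_mulVec, hPx, add_zero] at h'
      exact h'
    -- facts about q
    have hPq2 : P.mulVec q.2 = 0 := by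
      have := congrArg (P.mulVec) hq
      rw [mulVec_add, mulVec_neg, mulVec_mulVec, mulVec_mulVec] at this
      have e1 : P * (1 - P) = 0 := by rw [mul_sub, mul_one, hP2, sub_self]
      have e2 : P * (L + P) = P := by rw [mul_add, hPL, zero_add, hP2]
      rw [e1, e2] at this
      simpa using this
    have hq1 : q.1 = P.mulVec q.1 + L.mulVec q.2 := by
      have := congrArg ((1 - P).mulVec) hq
      rw [mulVec_add, mulVec_neg, mulVec_mulVec, mulVec_mulVec] at this
      have e1 : (1 - P) * (1 - P) = 1 - P := by noncomm_ring [hP2]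
      have e2 : (1 - P) * (L + P) = L := by noncomm_ring [hPL, hP2]
      rw [e1, e2, mulVec_zero] at this
      have h3 : (1 - P).mulVec q.1 = L.mulVec q.2 := neg_add_eq_zero.mp this
      rw [sub_mulVec, one_mulVec, sub_eq_iff_eq_add] at h3
      exact h3.trans (add_comm _ _)
    -- compute
    have c1 : (∑ i, x i * (starRingEnd ℂ) (q.1 i)) = (Lᴴ.mulVec x) ⬝ᵥ star q.2 := by
      conv_lhs => rw [hq1]
      have : (∑ i, x i * (starRingEnd ℂ) ((P.mulVec q.1 + L.mulVec q.2) i)) =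
          x ⬝ᵥ star (P.mulVec q.1) + x ⬝ᵥ star (L.mulVec q.2) := by
        simp [dotProduct, Finset.sum_add_distrib, mul_add]
      rw [this, adj_dot, adj_dot, hPH, hPx]
      simp
    have c2 : (∑ i, y i * (starRingEnd ℂ) (q.2 i)) = ((1 - P).mulVec y) ⬝ᵥ star q.2 := by
      have hq2 : q.2 = (1 - P).mulVec q.2 := by
        rw [sub_mulVec, one_mulVec, hPq2, sub_zero]
      conv_lhs => rw [hq2]
      have : (∑ i, y i * (starRingEnd ℂ) (((1 - P).mulVec q.2) i)) =
          y ⬝ᵥ star ((1 - P).mulVec q.2) := rfl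
      rw [this, adj_dot]
      have : (1 - P)ᴴ = 1 - P := by simp [hPH]
      rw [this]
    rw [c1, c2, ← add_dotProduct, hLHx, zero_dotProduct]
end

section
/- For all real a > 0 and b > 0, the set { k ∈ ℝ : k > 0 and sin(k a)·(1 − exp(k² b)) + k·cos(k a)·(1 + exp(k² b)) = 0 } is unbounded above. In particular, the secular equation det Z_{P,L}(k) = 0 has a sequence of real solutions k_n → ∞, so the corresponding operator has a sequence of real eigenvalues −k_n² tending to −∞. -/
/-- for all `a, b > 0`, the set of positive real solutions `k` of the secular
equation `sin(ka)(1 − e^{k²b}) + k cos(ka)(1 + e^{k²b}) = 0` is unbounded above; hence the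
corresponding operator has a sequence of real eigenvalues `−k_n²` tending to `−∞`. -/
theorem stmt_14 (a b : ℝ) (ha : 0 < a) (hb : 0 < b) :
    ¬ BddAbove {k : ℝ | 0 < k ∧
      Real.sin (k * a) * (1 - Real.exp (k ^ 2 * b)) +
        k * Real.cos (k * a) * (1 + Real.exp (k ^ 2 * b)) = 0} := by
  rw [not_bddAbove_iff]
  intro M
  set f : ℝ → ℝ := fun k => Real.sin (k * a) * (1 - Real.exp (k ^ 2 * b)) +
        k * Real.cos (k * a) * (1 + Real.exp (k ^ 2 * b)) with hf
  have hcont : Continuous f := by fun_prop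
  obtain ⟨n, hn⟩ := exists_nat_gt (max (M * a / (2 * Real.pi)) 1)
  have hpi := Real.pi_pos
  have hn1 : (1 : ℝ) < n := lt_of_le_of_lt (le_max_right _ _) hn
  have hnM : M * a / (2 * Real.pi) < n := lt_of_le_of_lt (le_max_left _ _) hn
  set k1 : ℝ := 2 * n * Real.pi / a with hk1
  set k2 : ℝ := (2 * n + 1) * Real.pi / a with hk2
  have hk1pos : 0 < k1 := by
    apply div_pos _ ha; positivity
  have hk2pos : 0 < k2 := by
    apply div_pos _ ha; positivity
  have hk12 : k1 ≤ k2 := by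
    rw [hk1, hk2]
    gcongr
    nlinarith
  have hMk1 : M < k1 := by
    rw [hk1, lt_div_iff₀ ha]
    rw [div_lt_iff₀ (by positivity)] at hnM
    nlinarith
  -- value at k1
  have hk1a : k1 * a = 2 * n * Real.pi := div_mul_cancel₀ _ ha.ne'
  have hsin1 : Real.sin (k1 * a) = 0 := by
    rw [hk1a]
    have := Real.sin_int_mul_pi (2 * n : ℤ)
    push_cast at this
    exact this
  have hcos1 : Real.cos (k1 * a) = 1 := by
    rw [hk1a]
    have := Real.cos_nat_mul_two_pi n
    convert this using 2
    ring
  have hf1 : 0 < f k1 := by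
    simp only [hf, hsin1, hcos1]
    have := Real.exp_pos (k1 ^ 2 * b)
    nlinarith
  -- value at k2
  have hk2a : k2 * a = (2 * n + 1) * Real.pi := div_mul_cancel₀ _ ha.ne'
  have hsin2 : Real.sin (k2 * a) = 0 := by
    rw [hk2a]
    have := Real.sin_int_mul_pi (2 * n + 1 : ℤ)
    push_cast at this
    exact this
  have hcos2 : Real.cos (k2 * a) = -1 := by
    rw [hk2a]
    have := Real.cos_nat_mul_two_pi_add_pi n
    convert this using 2
    ring
  have hf2 : f k2 < 0 := by
    simp only [hf, hsin2, hcos2]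
    have := Real.exp_pos (k2 ^ 2 * b)
    nlinarith
  have hsub := intermediate_value_Icc' hk12 hcont.continuousOn
  have h0 : (0 : ℝ) ∈ Set.Icc (f k2) (f k1) := ⟨hf2.le, hf1.le⟩
  obtain ⟨k, hk, hfk⟩ := hsub h0
  exact ⟨k, ⟨hk1pos.trans_le hk.1, hfk⟩, hMk1.trans_le hk.1⟩
end
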